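/- Fix d ≥ 2 and let (t_e)_{e∈E^d} be i.i.d. nonnegative real random variables. If α > 0 is sufficiently large, then there exists a constant C > 0, depending only on α and d, such that for all n ≥ 1, P(there exists an α-bad contour of cardinality ≥ n) ≤ e^{−Cn}. -/

import Mathlib

open MeasureTheory ProbabilityTheory Filter Set
open scoped ENNReal NNReal

namespace FPPBoundary

/-- Vertices of `ℤ^d`. -/
abbrev V (d : ℕ) := Fin d → ℤ

/-- Nearest-neighbor adjacency in `ℤ^d`. -/
def adj {d : ℕ} (x y : V d) : Prop := (∑ i, |x i - y i|) = 1

/-- `e` is a nearest-neighbor edge of `ℤ^d`. -/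
def IsEdge {d : ℕ} (e : Sym2 (V d)) : Prop := ∃ x y : V d, adj x y ∧ e = s(x, y)

/-- The set of nearest-neighbor edges, as a type. -/
abbrev Edge (d : ℕ) := {e : Sym2 (V d) // IsEdge e}

/-- `γ : Fin (n+1) → V d` is a lattice path from `x` to `y`. -/
def IsPathFrom {d : ℕ} (n : ℕ) (γ : Fin (n + 1) → V d) (x y : V d) : Prop :=
  γ 0 = x ∧ γ (Fin.last n) = y ∧ ∀ i : Fin n, adj (γ i.castSucc) (γ i.succ)

/-- The passage time of a lattice path. -/
noncomputable def pathCost {d : ℕ} (wgt : Sym2 (V d) → ℝ) (n : ℕ)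
    (γ : Fin (n + 1) → V d) : ℝ :=
  ∑ i : Fin n, wgt s(γ i.castSucc, γ i.succ)

/-- The first-passage time `T(x,y)`. -/
noncomputable def T {d : ℕ} (wgt : Sym2 (V d) → ℝ) (x y : V d) : ℝ :=
  sInf {c : ℝ | ∃ n γ, IsPathFrom n γ x y ∧ c = pathCost wgt n γ}

/-- The lattice point `[x]` with `x ∈ [x] + [0,1)^d`. -/
noncomputable def latt {d : ℕ} (x : Fin d → ℝ) : V d := fun i => ⌊x i⌋

/-- The extension of `T` to `ℝ^d × ℝ^d`. -/
noncomputable def Treal {d : ℕ} (wgt : Sym2 (V d) → ℝ) (x y : Fin d → ℝ) : ℝ :=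
  T wgt (latt x) (latt y)

/-- The ball `B(t)`. -/
noncomputable def ball {d : ℕ} (wgt : Sym2 (V d) → ℝ) (t : ℝ) : Set (V d) :=
  {x | T wgt 0 x ≤ t}

/-- The edge boundary `∂ₑ A`. -/
def edgeBoundary {d : ℕ} (A : Set (V d)) : Set (Sym2 (V d)) :=
  {e | ∃ x y : V d, adj x y ∧ x ∈ A ∧ y ∉ A ∧ e = s(x, y)}

/-- The vertex exterior boundary `∂^ext A`. -/
def extVertexBoundary {d : ℕ} (A : Set (V d)) : Set (V d) :=
  {x | x ∉ A ∧ (∃ y ∈ A, adj x y) ∧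
    ∃ γ : ℕ → V d, γ 0 = x ∧ Function.Injective γ ∧
      (∀ n, adj (γ n) (γ (n + 1))) ∧ ∀ n, γ n ∉ A}

/-- The edge exterior boundary `∂ₑ^ext A`. -/
def extEdgeBoundary {d : ℕ} (A : Set (V d)) : Set (Sym2 (V d)) :=
  {e | ∃ x y : V d, adj x y ∧ y ∈ A ∧ x ∈ extVertexBoundary A ∧ e = s(x, y)}

/-- `x` and `y` are joined by a lattice path all of whose edges lie in `O`. -/
def ConnectedIn {d : ℕ} (O : Set (Sym2 (V d))) (x y : V d) : Prop :=
  ∃ n γ, IsPathFrom n γ x y ∧ ∀ i : Fin n, s(γ (Fin.castSucc i), γ i.succ) ∈ O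

/-- The open cluster of `x` for the set `O` of open edges. -/
def cluster {d : ℕ} (O : Set (Sym2 (V d))) (x : V d) : Set (V d) := {y | ConnectedIn O x y}

/-- `c` is an i.i.d. Bernoulli(p) bond configuration under `P`. -/
def IsBernoulliPerc {d : ℕ} {Ω : Type} [MeasurableSpace Ω] (P : Measure Ω) (p : ℝ)
    (c : Ω → Sym2 (V d) → Bool) : Prop :=
  (∀ e : Edge d, Measurable fun ω => c ω e.1) ∧
  iIndepFun (fun (e : Edge d) ω => c ω e.1) P ∧
  ∀ e : Edge d, P {ω | c ω e.1 = true} = ENNReal.ofReal p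

/-- The critical probability of Bernoulli bond percolation on `ℤ^d`. -/
noncomputable def pc (d : ℕ) : ℝ :=
  sSup {p : ℝ | 0 ≤ p ∧ p ≤ 1 ∧
    ∀ (Ω : Type) (_ : MeasurableSpace Ω) (P : Measure Ω), IsProbabilityMeasure P →
      ∀ c : Ω → Sym2 (V d) → Bool, IsBernoulliPerc P p c →
        P {ω | (cluster {e | c ω e = true} 0).Infinite} = 0}

/-- `w` is an i.i.d. family of nonnegative edge-weights with marginal distribution `μ`. -/
def IsIIDWeights {d : ℕ} {Ω : Type} [MeasurableSpace Ω] (P : Measure Ω) (μ : Measure ℝ)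
    (w : Ω → Sym2 (V d) → ℝ) : Prop :=
  (∀ e : Edge d, Measurable fun ω => w ω e.1) ∧
  iIndepFun (fun (e : Edge d) ω => w ω e.1) P ∧
  (∀ e : Edge d, Measure.map (fun ω => w ω e.1) P = μ) ∧
  ∀ (ω) (e : Edge d), 0 ≤ w ω e.1

/-- `Y`: the minimum of the weights of the `2d` edges incident to the origin. -/
noncomputable def Ymin {d : ℕ} (wgt : Sym2 (V d) → ℝ) : ℝ :=
  ⨅ z : {z : V d // adj 0 z}, wgt s(0, z.1)

/-- `E[Y ∧ s]`. -/
noncomputable def EYmin {d : ℕ} {Ω : Type} [MeasurableSpace Ω] (P : Measure Ω)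
    (w : Ω → Sym2 (V d) → ℝ) (s : ℝ) : ℝ :=
  ∫ ω, min (Ymin (w ω)) s ∂P

/-- the distribution function `F_Y` of `Y`. -/
noncomputable def FY {d : ℕ} {Ω : Type} [MeasurableSpace Ω] (P : Measure Ω)
    (w : Ω → Sym2 (V d) → ℝ) (s : ℝ) : ℝ :=
  (P {ω | Ymin (w ω) ≤ s}).toReal

/-- the first coordinate vector. -/
def e1 (d : ℕ) : V d := fun j => if (j : ℕ) = 0 then 1 else 0

/-- `ℓ^∞` norm of a lattice point, as a real number. -/
def linf {d : ℕ} (x : V d) : ℝ := ((Finset.univ.sup fun i => (x i).natAbs : ℕ) : ℝ)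

/-- `ℓ^2` norm on `ℝ^d`. -/
noncomputable def l2 {d : ℕ} (x : Fin d → ℝ) : ℝ := Real.sqrt (∑ i, x i ^ 2)

end FPPBoundary
namespace FPPBoundary

/-- `W` is *-connected. -/
def starConn {d : ℕ} (W : Finset (V d)) : Prop :=
  ∀ u ∈ W, ∀ v ∈ W, ∃ (k : ℕ) (γ : Fin (k + 1) → V d),
    γ 0 = u ∧ γ (Fin.last k) = v ∧ (∀ i, γ i ∈ W) ∧
    ∀ i : Fin k, (Finset.univ.sup fun j => ((γ i.castSucc - γ i.succ) j).natAbs) ≤ 1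

/-- `W` encloses `0`: every infinite vertex-self-avoiding lattice path starting at `0`
meets `W`. -/
def encloses0 {d : ℕ} (W : Finset (V d)) : Prop :=
  ∀ γ : ℕ → V d, γ 0 = 0 → Function.Injective γ →
    (∀ n, adj (γ n) (γ (n + 1))) → ∃ n, γ n ∈ W

/-- `W` is an `α`-bad contour for the weights `wgt`. -/
def badContour {d : ℕ} (α : ℝ) (wgt : Sym2 (V d) → ℝ) (W : Finset (V d)) : Prop :=
  starConn W ∧ encloses0 W ∧
    (W.card : ℝ) ≤ 2 * ({v ∈ (W : Set (V d)) | ∃ u, adj v u ∧ α < wgt s(v, u)}.ncard : ℝ)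

end FPPBoundary
namespace FPPBoundary

variable {d : ℕ}

/-- ℓ¹ distance -/
def dist1 (x y : V d) : ℤ := ∑ i, |x i - y i|

lemma dist1_symm (x y : V d) : dist1 x y = dist1 y x := by
  unfold dist1; exact Finset.sum_congr rfl fun i _ => abs_sub_comm _ _

lemma dist1_self (x : V d) : dist1 x x = 0 := by
  simp [dist1]

lemma adj_iff {x y : V d} : adj x y ↔ dist1 x y = 1 := Iff.rfl

/-- star step (including staying put) -/
def sstep (x y : V d) : Prop := ∀ j, |x j - y j| ≤ 1

lemma sstep_refl (x : V d) : sstep x x := fun j => by simp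

lemma sstep_symm {x y : V d} (h : sstep x y) : sstep y x := fun j => by
  rw [abs_sub_comm]; exact h j

/-- neighbor point encoded by a coordinate and a sign -/
def nbrPt (x : V d) (c : Fin d × Bool) : V d :=
  Function.update x c.1 (x c.1 + (if c.2 then 1 else -1))

lemma adj_nbrPt (x : V d) (c : Fin d × Bool) : adj x (nbrPt x c) := by
  unfold adj nbrPt
  rw [show (1 : ℤ) = ∑ i, if i = c.1 then 1 else 0 by simp]
  refine Finset.sum_congr rfl fun i _ => ?_
  by_cases h : i = c.1
  · subst h; simp [Function.update_self]; cases c.2 <;> simp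
  · simp [Function.update_of_ne h, h]

lemma sum_abs_eq_one {f : Fin d → ℤ} (h : (∑ i, |f i|) = 1) :
    ∃ j, |f j| = 1 ∧ ∀ i, i ≠ j → f i = 0 := by
  have hnn : ∀ i ∈ Finset.univ, 0 ≤ |f i| := fun i _ => abs_nonneg _
  have hex : ∃ j : Fin d, 0 < |f j| := by
    by_contra hc
    push_neg at hc
    have : (∑ i, |f i|) ≤ 0 := Finset.sum_nonpos fun i _ => hc i
    omega
  obtain ⟨j, hj⟩ := hex
  have hsplit : (∑ i, |f i|) = |f j| + ∑ i ∈ Finset.univ.erase j, |f i| :=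
    (Finset.add_sum_erase _ _ (Finset.mem_univ j)).symm
  have hrest_nn : 0 ≤ ∑ i ∈ Finset.univ.erase j, |f i| :=
    Finset.sum_nonneg fun i _ => abs_nonneg _
  have hfj : |f j| = 1 := by omega
  have hrest : (∑ i ∈ Finset.univ.erase j, |f i|) = 0 := by omega
  refine ⟨j, hfj, fun i hi => ?_⟩
  have := (Finset.sum_eq_zero_iff_of_nonneg fun i _ => abs_nonneg (f i)).1 hrest i
    (Finset.mem_erase.2 ⟨hi, Finset.mem_univ i⟩)
  exact abs_eq_zero.1 this

lemma adj_exists_nbr {x y : V d} (h : adj x y) : ∃ c, y = nbrPt x c := by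
  obtain ⟨j, hj, hoth⟩ := sum_abs_eq_one h
  refine ⟨(j, decide (y j = x j + 1)), funext fun i => ?_⟩
  by_cases hij : i = j
  · subst hij
    unfold nbrPt
    simp only [Function.update_self]
    rcases (abs_eq (by norm_num : (0:ℤ) ≤ 1)).1 hj with h1 | h1
    · have : y i = x i - 1 := by omega
      have hne : ¬ (y i = x i + 1) := by omega
      simp [hne, this]; omega
    · have : y i = x i + 1 := by omega
      simp [this]
  · have := hoth i hij
    unfold nbrPt
    rw [Function.update_of_ne hij]
    omega

lemma edge_ne_of_far {v u v' u' : V d} (h : adj v u) (h' : adj v' u')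
    (hfar : 3 ≤ dist1 v v') : s(v, u) ≠ s(v', u') := by
  intro heq
  rw [Sym2.eq_iff] at heq
  rcases heq with ⟨rfl, rfl⟩ | ⟨rfl, rfl⟩
  · rw [dist1_self] at hfar; omega
  · rw [adj_iff] at h'
    rw [dist1_symm] at hfar
    omega

/-- a path of length `n` from `x` to `y` staying inside `W` (steps may stay put). -/
def PathIn (W : Finset (V d)) (x y : V d) (n : ℕ) : Prop :=
  ∃ γ : ℕ → V d, γ 0 = x ∧ γ n = y ∧ (∀ i < n, sstep (γ i) (γ (i+1))) ∧ ∀ i ≤ n, γ i ∈ W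

lemma PathIn.concat {W : Finset (V d)} {x y z : V d} {n m : ℕ}
    (h1 : PathIn W x y n) (h2 : PathIn W y z m) : PathIn W x z (n + m) := by
  obtain ⟨γ1, hγ10, hγ1n, hs1, hm1⟩ := h1
  obtain ⟨γ2, hγ20, hγ2m, hs2, hm2⟩ := h2
  refine ⟨fun i => if i ≤ n then γ1 i else γ2 (i - n), by simp [hγ10], ?_, ?_, ?_⟩
  · by_cases h : n + m ≤ n
    · have : m = 0 := by omega
      subst this
      simp only [if_pos h]
      rw [show n + 0 = n from rfl, hγ1n, ← hγ20]
      exact hγ2m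
    · simp only [if_neg h]
      rw [show n + m - n = m by omega, hγ2m]
  · intro i hi
    by_cases h1' : i + 1 ≤ n
    · simp only [if_pos (by omega : i ≤ n), if_pos h1']
      exact hs1 i (by omega)
    · by_cases h2' : i ≤ n
      · -- i = n
        have hin : i = n := by omega
        subst hin
        simp only [if_pos h2', if_neg h1']
        rw [hγ1n, show i + 1 - i = 1 from by omega, ← hγ20]
        exact hs2 0 (by omega)
      · simp only [if_neg h2', if_neg h1']
        rw [show i + 1 - n = (i - n) + 1 by omega]
        exact hs2 (i - n) (by omega)
  · intro i hi
    by_cases h : i ≤ n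
    · simp only [if_pos h]; exact hm1 i h
    · simp only [if_neg h]; exact hm2 (i - n) (by omega)

/-- minimal distance from `r` within `W` -/
noncomputable def DW (W : Finset (V d)) (r v : V d) : ℕ :=
  sInf {n | PathIn W r v n}

lemma DW_le {W : Finset (V d)} {r v : V d} {n : ℕ} (h : PathIn W r v n) : DW W r v ≤ n :=
  Nat.sInf_le h

lemma DW_spec {W : Finset (V d)} {r v : V d} (h : ∃ n, PathIn W r v n) :
    PathIn W r v (DW W r v) :=
  Nat.sInf_mem h

lemma DW_self {W : Finset (V d)} {r : V d} (hr : r ∈ W) : DW W r r = 0 :=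
  Nat.le_zero.1 (DW_le ⟨fun _ => r, rfl, rfl, fun i hi => by omega, fun i _ => hr⟩)

/-- On a minimal path, the `i`-th vertex is at distance exactly `i`. -/
lemma min_path_index {W : Finset (V d)} {r v : V d} (hv : ∃ n, PathIn W r v n)
    {γ : ℕ → V d} (hγ0 : γ 0 = r) (hγL : γ (DW W r v) = v)
    (hsteps : ∀ i < DW W r v, sstep (γ i) (γ (i+1)))
    (hmem : ∀ i ≤ DW W r v, γ i ∈ W)
    {i : ℕ} (hi : i ≤ DW W r v) : DW W r (γ i) = i := by
  set L := DW W r v with hL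
  -- prefix: DW ≤ i
  have hpre : PathIn W r (γ i) i :=
    ⟨γ, hγ0, rfl, fun t ht => hsteps t (by omega), fun t ht => hmem t (by omega)⟩
  have hle : DW W r (γ i) ≤ i := DW_le hpre
  -- suffix: path from γ i to v of length L - i
  have hsuf : PathIn W (γ i) v (L - i) :=
    ⟨fun t => γ (i + t), rfl,
      by show γ (i + (L - i)) = v; rw [show i + (L - i) = L by omega]; exact hγL,
      fun t ht => by
        show sstep (γ (i + t)) (γ (i + (t+1)))
        rw [show i + (t+1) = (i+t)+1 by omega]
        exact hsteps (i+t) (by omega),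
      fun t ht => hmem (i+t) (by omega)⟩
  -- concat minimal path to γ i with suffix
  have hmin : PathIn W r (γ i) (DW W r (γ i)) := DW_spec ⟨i, hpre⟩
  have hcat : PathIn W r v (DW W r (γ i) + (L - i)) := hmin.concat hsuf
  have : L ≤ DW W r (γ i) + (L - i) := Nat.sInf_le hcat
  omega

/-- Covering walk lemma: a *-connected finite set admits a walk from `r` of length
`2 * (card - 1)` visiting every vertex. -/
lemma exists_cover_walk : ∀ (N : ℕ) (W : Finset (V d)) (r : V d), W.card = N → r ∈ W →
    (∀ v ∈ W, ∃ n, PathIn W r v n) →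
    ∃ γ : ℕ → V d, γ 0 = r ∧ (∀ i, sstep (γ i) (γ (i+1))) ∧ (∀ i, γ i ∈ W) ∧
      ∀ v ∈ W, ∃ i ≤ 2 * (W.card - 1), γ i = v := by
  intro N
  induction N using Nat.strong_induction_on with
  | _ N IH =>
  intro W r hcard hr hconn
  rcases (W.erase r).eq_empty_or_nonempty with hemp | hne
  · -- W = {r}
    have hWr : W = {r} := by
      apply Finset.Subset.antisymm
      · intro x hx
        rcases eq_or_ne x r with rfl | hxr
        · simp
        · exact absurd (Finset.mem_erase.2 ⟨hxr, hx⟩) (by simp [hemp])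
      · simpa using hr
    refine ⟨fun _ => r, rfl, fun i => sstep_refl r, fun i => hr, fun v hv => ⟨0, by omega, ?_⟩⟩
    rw [hWr] at hv
    simpa using (Finset.mem_singleton.1 hv).symm
  · -- pick farthest w in W.erase r
    obtain ⟨w, hwmem, hwmax⟩ := Finset.exists_max_image (W.erase r) (fun v => DW W r v) hne
    have hwW : w ∈ W := Finset.mem_of_mem_erase hwmem
    have hwr : w ≠ r := (Finset.mem_erase.1 hwmem).1
    have hwex : ∃ n, PathIn W r w n := hconn w hwW
    set L := DW W r w with hLdef
    obtain ⟨γw, hγw0, hγwL, hγws, hγwm⟩ := DW_spec hwex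
    have hL1 : 1 ≤ L := by
      rcases Nat.eq_zero_or_pos L with h0 | h; swap; · exact h
      exfalso; apply hwr
      rw [← hγwL, show DW W r w = 0 from h0, hγw0]
    -- the vertex before w on the minimal path
    set w' := γw (L - 1) with hw'def
    have hw'W : w' ∈ W := hγwm _ (by omega)
    have hDw' : DW W r w' = L - 1 := min_path_index hwex hγw0 hγwL hγws hγwm (by omega)
    have hw'ne : w' ≠ w := by
      intro h
      rw [h] at hDw'
      omega
    have hstep_w'w : sstep w' w := by
      have := hγws (L-1) (by omega)
      rwa [show L - 1 + 1 = L by omega, hγwL] at this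
    have hw'mem : w' ∈ W.erase w := Finset.mem_erase.2 ⟨hw'ne, hw'W⟩
    have hrW' : r ∈ W.erase w := Finset.mem_erase.2 ⟨Ne.symm hwr, hr⟩
    -- connectivity of W.erase w
    have hconn' : ∀ v ∈ W.erase w, ∃ n, PathIn (W.erase w) r v n := by
      intro v hv
      have hvW : v ∈ W := Finset.mem_of_mem_erase hv
      have hvne : v ≠ w := (Finset.mem_erase.1 hv).1
      obtain ⟨γv, hγv0, hγvL, hγvs, hγvm⟩ := DW_spec (hconn v hvW)
      set Lv := DW W r v with hLv
      have hvnw : ∀ i ≤ Lv, γv i ≠ w := by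
        intro i hi hiw
        have hidx : DW W r (γv i) = i := min_path_index (hconn v hvW) hγv0 hγvL hγvs hγvm hi
        rcases eq_or_ne i Lv with rfl | hlt
        · exact hvne (by rw [← hγvL, hiw])
        · -- i < Lv, and DW w = i < Lv = DW v ≤ DW w
          have hvr : v ≠ r := by
            intro h
            have : Lv = 0 := by rw [hLv, h, DW_self hr]
            omega
          have hvmax : Lv ≤ DW W r w := hwmax v (Finset.mem_erase.2 ⟨hvr, hvW⟩)
          rw [hiw] at hidx
          rw [← hLdef] at hvmax
          omega
      exact ⟨Lv, γv, hγv0, hγvL, hγvs,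
        fun i hi => Finset.mem_erase.2 ⟨hvnw i hi, hγvm i hi⟩⟩
    -- apply IH
    have hcard' : (W.erase w).card = N - 1 := by rw [Finset.card_erase_of_mem hwW, hcard]
    have hN2 : 2 ≤ N := by
      have : ({r, w} : Finset (V d)) ⊆ W := by
        intro x hx
        rcases Finset.mem_insert.1 hx with rfl | hx
        · exact hr
        · rw [Finset.mem_singleton.1 hx]; exact hwW
      have h2 : ({r, w} : Finset (V d)).card = 2 := by
        rw [Finset.card_insert_of_notMem (by simp [Ne.symm hwr]), Finset.card_singleton]
      calc 2 = ({r, w} : Finset (V d)).card := h2.symm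
        _ ≤ W.card := Finset.card_le_card this
        _ = N := hcard
    obtain ⟨γ', hγ'0, hγ's, hγ'm, hγ'cov⟩ := IH (N-1) (by omega) (W.erase w) r hcard' hrW' hconn'
    obtain ⟨i0, hi0le, hi0⟩ := hγ'cov w' hw'mem
    rw [hcard'] at hi0le
    -- splice in the detour to w at position i0
    refine ⟨fun i => if i ≤ i0 then γ' i else if i = i0 + 1 then w else γ' (i - 2),
      by simp [hγ'0], ?_, ?_, ?_⟩
    · intro i
      dsimp only
      by_cases h1 : i + 1 ≤ i0
      · simp only [if_pos (by omega : i ≤ i0), if_pos h1]; exact hγ's i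
      · by_cases h2 : i ≤ i0
        · -- i = i0
          have : i = i0 := by omega
          subst this
          rw [if_pos h2, if_neg h1, if_pos rfl, hi0]
          exact hstep_w'w
        · by_cases h3 : i = i0 + 1
          · subst h3
            rw [if_neg h2, if_pos rfl, if_neg (by omega : ¬ i0 + 1 + 1 ≤ i0),
              if_neg (by omega : ¬ i0 + 1 + 1 = i0 + 1),
              show i0 + 1 + 1 - 2 = i0 by omega, hi0]
            exact sstep_symm hstep_w'w
          · simp only [if_neg h2, if_neg h3, if_neg (by omega : ¬ i + 1 ≤ i0),
              if_neg (by omega : ¬ i + 1 = i0 + 1)]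
            rw [show i + 1 - 2 = (i - 2) + 1 by omega]
            exact hγ's (i - 2)
    · intro i
      dsimp only
      by_cases h1 : i ≤ i0
      · simp only [if_pos h1]; exact Finset.mem_of_mem_erase (hγ'm i)
      · by_cases h2 : i = i0 + 1
        · rw [if_neg h1, if_pos h2]; exact hwW
        · simp only [if_neg h1, if_neg h2]; exact Finset.mem_of_mem_erase (hγ'm (i-2))
    · intro v hv
      rcases eq_or_ne v w with rfl | hvw
      · refine ⟨i0 + 1, by omega, ?_⟩
        dsimp only
        rw [if_neg (by omega : ¬ i0 + 1 ≤ i0), if_pos rfl]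
      · obtain ⟨i, hile, hieq⟩ := hγ'cov v (Finset.mem_erase.2 ⟨hvw, hv⟩)
        rw [hcard'] at hile
        by_cases h1 : i ≤ i0
        · exact ⟨i, by omega, by dsimp only; rw [if_pos h1]; exact hieq⟩
        · refine ⟨i + 2, by omega, ?_⟩
          dsimp only
          simp only [if_neg (by omega : ¬ i + 2 ≤ i0), if_neg (by omega : ¬ i + 2 = i0 + 1),
            show i + 2 - 2 = i by omega]
          exact hieq

lemma starConn_pathIn {W : Finset (V d)} (h : starConn W) {u v : V d}
    (hu : u ∈ W) (hv : v ∈ W) : ∃ n, PathIn W u v n := by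
  obtain ⟨k, γ, hγ0, hγk, hγm, hγs⟩ := h u hu v hv
  refine ⟨k, fun i => γ ⟨min i k, by omega⟩, ?_, ?_, ?_, ?_⟩
  · rw [← hγ0]; congr 1
  · rw [← hγk]; congr 1; ext; simp [Fin.last]
  · intro i hi j
    have hs := hγs ⟨i, hi⟩
    rw [Finset.sup_le_iff] at hs
    have h1 := hs j (Finset.mem_univ j)
    rw [Pi.sub_apply] at h1
    have e1 : (⟨min i k, by omega⟩ : Fin (k+1)) = Fin.castSucc ⟨i, hi⟩ := by
      ext; simp; omega
    have e2 : (⟨min (i+1) k, by omega⟩ : Fin (k+1)) = Fin.succ ⟨i, hi⟩ := by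
      ext; simp [Fin.succ]; omega
    dsimp only
    rw [e1, e2, abs_le]
    omega
  · intro i _
    exact hγm _

lemma int_ivt (f : ℕ → ℤ) (L : ℕ) (hstep : ∀ i < L, |f (i+1) - f i| ≤ 1)
    (c : ℤ) (h1 : f L ≤ c) (h2 : c ≤ f 0) : ∃ i ≤ L, f i = c := by
  classical
  set A := (Finset.range (L+1)).filter (fun i => c ≤ f i) with hA
  have hAne : A.Nonempty := ⟨0, by simp [hA, h2]⟩
  set i1 := A.max' hAne with hi1
  have hi1mem : i1 ∈ A := A.max'_mem hAne
  rw [hA, Finset.mem_filter, Finset.mem_range] at hi1mem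
  obtain ⟨hi1L, hi1c⟩ := hi1mem
  rcases eq_or_ne i1 L with heq | hne
  · exact ⟨L, le_rfl, by rw [← heq] at h1 ⊢; omega⟩
  · have hnmem : i1 + 1 ∉ A := fun hmem => by
      have := A.le_max' (i1+1) hmem
      omega
    have hlt : ¬ c ≤ f (i1 + 1) := by
      intro hc
      exact hnmem (by rw [hA]; exact Finset.mem_filter.2 ⟨Finset.mem_range.2 (by omega), hc⟩)
    have := hstep i1 (by omega)
    rw [abs_le] at this
    exact ⟨i1, by omega, by omega⟩

/-- point on the first axis -/
def axisPt (d : ℕ) (k : ℤ) : V d := fun j => if (j : ℕ) = 0 then k else 0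

lemma axisPt_adj (hd : 1 ≤ d) (n : ℤ) : adj (axisPt d n) (axisPt d (n+1)) := by
  unfold adj axisPt
  have i0 : Fin d := ⟨0, by omega⟩
  rw [show (1 : ℤ) = ∑ i : Fin d, if i = (⟨0, by omega⟩ : Fin d) then 1 else 0 by simp]
  refine Finset.sum_congr rfl fun i _ => ?_
  by_cases h : i = (⟨0, by omega⟩ : Fin d)
  · have : (i : ℕ) = 0 := by rw [h]
    simp [h, this]
  · have : (i : ℕ) ≠ 0 := fun hc => h (Fin.ext hc)
    simp [h, this]

lemma axisPt_inj (hd : 1 ≤ d) : Function.Injective (axisPt d) := by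
  intro a b hab
  have := congrFun hab (⟨0, by omega⟩ : Fin d)
  simpa [axisPt] using this

lemma axisPt_zero : axisPt d 0 = 0 := by
  funext j; simp [axisPt]

lemma exists_axis_start {W : Finset (V d)} (hd : 2 ≤ d) (hstar : starConn W)
    (henc : encloses0 W) : ∃ k : ℕ, k + 1 ≤ W.card ∧ axisPt d (k : ℤ) ∈ W := by
  classical
  have hd1 : 1 ≤ d := by omega
  obtain ⟨k1, hk1⟩ := henc (fun n => axisPt d (n : ℤ)) (by simp [axisPt_zero])
    (fun a b hab => by exact_mod_cast axisPt_inj hd1 hab)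
    (fun n => by exact_mod_cast axisPt_adj hd1 (n : ℤ))
  obtain ⟨j1, hj1⟩ := henc (fun n => axisPt d (-(n : ℤ))) (by simp [axisPt_zero])
    (fun a b hab => by have := axisPt_inj hd1 hab; omega)
    (fun n => by
      show adj (axisPt d (-(n:ℤ))) (axisPt d (-((n+1 : ℕ) : ℤ)))
      have h := axisPt_adj hd1 (-(n:ℤ) - 1)
      rw [show -(n:ℤ) - 1 + 1 = -(n:ℤ) by ring] at h
      rw [show -(((n+1 : ℕ)) : ℤ) = -(n:ℤ) - 1 by push_cast; ring]
      unfold adj at h ⊢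
      rw [show (∑ i, |axisPt d (-(n:ℤ)) i - axisPt d (-(n:ℤ) - 1) i|)
        = ∑ i, |axisPt d (-(n:ℤ) - 1) i - axisPt d (-(n:ℤ)) i| from
          Finset.sum_congr rfl fun i _ => abs_sub_comm _ _]
      exact h)
  -- path from axisPt k1 to axisPt (-j1) inside W
  obtain ⟨n, γ, hγ0, hγn, hγs, hγm⟩ := starConn_pathIn hstar hk1 hj1
  set i0 : Fin d := ⟨0, by omega⟩ with hi0
  have key : ∀ c ∈ Finset.Icc (0:ℤ) (k1:ℤ), ∃ v ∈ W, v i0 = c := by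
    intro c hc
    rw [Finset.mem_Icc] at hc
    obtain ⟨i, hiL, hieq⟩ := int_ivt (fun i => γ i i0) n
      (fun i hi => by
        have := sstep_symm (hγs i hi) i0
        exact this)
      c (by show γ n i0 ≤ c; rw [hγn]; simp [axisPt, hi0]; omega)
      (by show c ≤ γ 0 i0; rw [hγ0]; simp [axisPt, hi0]; omega)
    exact ⟨γ i, hγm i hiL, hieq⟩
  have hcard : (Finset.Icc (0:ℤ) (k1:ℤ)).card ≤ W.card := by
    have : ∀ c ∈ Finset.Icc (0:ℤ) (k1:ℤ),
        (if h : ∃ v ∈ W, v i0 = c then h.choose else 0) ∈ W := by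
      intro c hc
      rw [dif_pos (key c hc)]
      exact (key c hc).choose_spec.1
    refine Finset.card_le_card_of_injOn _ this ?_
    intro c hc c' hc' heq
    dsimp only at heq
    rw [dif_pos (key c hc), dif_pos (key c' hc')] at heq
    have h1 := (key c hc).choose_spec.2
    have h2 := (key c' hc').choose_spec.2
    rw [← h1, ← h2, heq]
  rw [Int.card_Icc] at hcard
  refine ⟨k1, ?_, hk1⟩
  omega
def stepOf (c : Fin d → Fin 3) : V d := fun j => ((c j : ℕ) : ℤ) - 1

def encStep (v : V d) : Fin d → Fin 3 :=
  fun j => if v j = 1 then 2 else if v j = 0 then 1 else 0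

lemma stepOf_encStep {v : V d} (h : ∀ j, |v j| ≤ 1) : stepOf (encStep v) = v := by
  funext j
  have := h j
  rw [abs_le] at this
  unfold stepOf encStep
  rcases show v j = 1 ∨ v j = 0 ∨ v j = -1 by omega with h1 | h1 | h1 <;> simp [h1]

def walkOf (x : V d) (δ : ℕ → V d) : ℕ → V d
  | 0 => x
  | i+1 => walkOf x δ i + δ i

def decode (d m : ℕ) (c : Fin m × (Fin (2*m) → Fin d → Fin 3)) : Finset (V d) :=
  (Finset.range (2*m+1)).image
    (walkOf (axisPt d ((c.1 : ℕ) : ℤ))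
      (fun i => if h : i < 2*m then stepOf (c.2 ⟨i, h⟩) else 0))

lemma decode_card_le (m : ℕ) (c : Fin m × (Fin (2*m) → Fin d → Fin 3)) :
    (decode d m c).card ≤ 2*m+1 :=
  le_trans (Finset.card_image_le) (by rw [Finset.card_range])

lemma exists_code {W : Finset (V d)} (hd : 2 ≤ d) (hstar : starConn W)
    (henc : encloses0 W) (m : ℕ) (hm : W.card = m) (hm1 : 1 ≤ m) :
    ∃ c : Fin m × (Fin (2*m) → Fin d → Fin 3), decode d m c = W := by
  obtain ⟨k, hkm, hkW⟩ := exists_axis_start hd hstar henc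
  rw [hm] at hkm
  set r := axisPt d (k : ℤ) with hr
  obtain ⟨γ, hγ0, hγs, hγm, hγcov⟩ := exists_cover_walk W.card W r rfl hkW
    (fun v hv => starConn_pathIn hstar hkW hv)
  refine ⟨(⟨k, by omega⟩, fun i => encStep (γ ((i : ℕ)+1) - γ (i : ℕ))), ?_⟩
  set δ : ℕ → V d := fun i => if h : i < 2*m then
    stepOf ((fun i : Fin (2*m) => encStep (γ ((i : ℕ)+1) - γ (i : ℕ))) ⟨i, h⟩) else 0 with hδ
  have hδeq : ∀ i, i < 2*m → δ i = γ (i+1) - γ i := by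
    intro i hi
    rw [hδ]
    dsimp only
    rw [dif_pos hi]
    refine stepOf_encStep fun j => ?_
    rw [Pi.sub_apply, abs_sub_comm]
    exact hγs i j
  have hwalk : ∀ i, i ≤ 2*m → walkOf r δ i = γ i := by
    intro i
    induction i with
    | zero => intro _; rw [walkOf, hγ0]
    | succ i ih =>
      intro hi
      rw [walkOf, ih (by omega), hδeq i (by omega)]
      funext j
      simp
  apply Finset.Subset.antisymm
  · intro x hx
    unfold decode at hx
    obtain ⟨i, hirange, hieq⟩ := Finset.mem_image.1 hx
    rw [Finset.mem_range] at hirange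
    have : walkOf r δ i = γ i := hwalk i (by omega)
    rw [show ((⟨k, by omega⟩ : Fin m) : ℕ) = k from rfl] at hieq
    rw [← hr] at hieq
    rw [this] at hieq
    rw [← hieq]
    exact hγm i
  · intro v hv
    obtain ⟨i, hile, hieq⟩ := hγcov v hv
    unfold decode
    refine Finset.mem_image.2 ⟨i, Finset.mem_range.2 (by omega), ?_⟩
    rw [show ((⟨k, by omega⟩ : Fin m) : ℕ) = k from rfl, ← hr]
    rw [hwalk i (by omega : i ≤ 2*m), hieq]

/-- `v` has an incident heavy edge -/
def heavyAt (α : ℝ) (wgt : Sym2 (V d) → ℝ) (v : V d) : Prop :=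
  ∃ u, adj v u ∧ α < wgt s(v, u)

/-- pairwise ℓ¹-separated by 3 -/
def Far (S : Finset (V d)) : Prop := ∀ v ∈ S, ∀ u ∈ S, v ≠ u → 3 ≤ dist1 v u

variable {Ω : Type} [MeasurableSpace Ω] {P : Measure Ω} {μ : Measure ℝ}
  {w : Ω → Sym2 (V d) → ℝ}

lemma meas_edge (hiid : IsIIDWeights P μ w) (α : ℝ) (e : Edge d) :
    P {ω | α < w ω e.1} = μ (Ioi α) := by
  have hmeas := hiid.1 e
  have h : {ω | α < w ω e.1} = (fun ω => w ω e.1) ⁻¹' (Ioi α) := rfl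
  rw [h, ← Measure.map_apply hmeas measurableSet_Ioi, hiid.2.2.1 e]

lemma meas_iInter_edges (hiid : IsIIDWeights P μ w) (α : ℝ) (F : Finset (Edge d)) :
    P (⋂ e ∈ F, {ω | α < w ω e.1}) = μ (Ioi α) ^ F.card := by
  have h := hiid.2.1.meas_biInter (S := F) (s := fun e => {ω | α < w ω e.1})
    (fun e _ => ⟨Ioi α, measurableSet_Ioi, rfl⟩)
  rw [h, Finset.prod_congr rfl (fun e _ => meas_edge hiid α e), Finset.prod_const]

lemma meas_allHeavy (hiid : IsIIDWeights P μ w) (α : ℝ) (S : Finset (V d))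
    (hfar : Far S) :
    P {ω | ∀ v ∈ S, heavyAt α (w ω) v}
      ≤ (((2*d)^S.card : ℕ) : ℝ≥0∞) * μ (Ioi α) ^ S.card := by
  classical
  let A : ({x // x ∈ S} → Fin d × Bool) → Set Ω :=
    fun f => ⋂ v : {x // x ∈ S}, {ω | α < w ω s(v.1, nbrPt v.1 (f v))}
  have hsub : {ω | ∀ v ∈ S, heavyAt α (w ω) v} ⊆ ⋃ f, A f := by
    intro ω hω
    choose u hadj hheavy using fun v : {x // x ∈ S} => hω v.1 v.2
    choose c hc using fun v : {x // x ∈ S} => adj_exists_nbr (hadj v)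
    refine mem_iUnion.2 ⟨c, mem_iInter.2 fun v => ?_⟩
    have hh := hheavy v
    rw [hc v] at hh
    exact hh
  have hterm : ∀ f, P (A f) ≤ μ (Ioi α) ^ S.card := by
    intro f
    set g : {x // x ∈ S} → Edge d :=
      fun v => ⟨s(v.1, nbrPt v.1 (f v)), v.1, nbrPt v.1 (f v), adj_nbrPt _ _, rfl⟩ with hg
    have hginj : Function.Injective g := by
      intro v v' heq
      by_contra hne
      have hne1 : v.1 ≠ v'.1 := fun h => hne (Subtype.ext h)
      exact edge_ne_of_far (adj_nbrPt v.1 (f v)) (adj_nbrPt v'.1 (f v'))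
        (hfar v.1 v.2 v'.1 v'.2 hne1) (congrArg Subtype.val heq)
    have hAF : A f = ⋂ e ∈ Finset.univ.image g, {ω | α < w ω e.1} := by
      ext ω
      rw [show ω ∈ A f ↔ ∀ v : {x // x ∈ S}, α < w ω s(v.1, nbrPt v.1 (f v)) by
        simp only [A, mem_iInter]; rfl, mem_iInter₂]
      constructor
      · rintro h e he
        obtain ⟨v, -, rfl⟩ := Finset.mem_image.1 he
        exact h v
      · intro h v
        exact h (g v) (Finset.mem_image.2 ⟨v, Finset.mem_univ v, rfl⟩)
    rw [hAF, meas_iInter_edges hiid α]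
    rw [Finset.card_image_of_injective _ hginj, Finset.card_univ, Fintype.card_coe]
  calc P {ω | ∀ v ∈ S, heavyAt α (w ω) v} ≤ P (⋃ f, A f) := measure_mono hsub
    _ ≤ ∑' f, P (A f) := measure_iUnion_le _
    _ = ∑ f, P (A f) := tsum_fintype _
    _ ≤ Finset.univ.card • (μ (Ioi α) ^ S.card) :=
        Finset.sum_le_card_nsmul _ _ _ (fun f _ => hterm f)
    _ = (((2*d)^S.card : ℕ) : ℝ≥0∞) * μ (Ioi α) ^ S.card := by
        rw [nsmul_eq_mul]
        congr 1
        rw [Finset.card_univ, Fintype.card_fun]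
        simp [Fintype.card_coe, Fintype.card_prod, mul_comm]

open Classical in
/-- the well-separated subsets of `A` of size `s` -/
noncomputable def farSubsets (A : Finset (V d)) (s : ℕ) : Finset (Finset (V d)) :=
  A.powerset.filter (fun S => Far S ∧ S.card = s)

lemma mem_farSubsets {A S : Finset (V d)} {s : ℕ} :
    S ∈ farSubsets A s ↔ (S ⊆ A ∧ Far S ∧ S.card = s) := by
  unfold farSubsets
  simp only [Finset.mem_filter, Finset.mem_powerset, and_assoc]

/-- union over well-separated subsets of A of size s, all heavy -/
lemma meas_badS (hiid : IsIIDWeights P μ w) (α : ℝ) (A : Finset (V d)) (s : ℕ) :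
    P (⋃ S ∈ farSubsets A s, {ω | ∀ v ∈ S, heavyAt α (w ω) v})
      ≤ ((2^A.card : ℕ) : ℝ≥0∞) * ((((2*d)^s : ℕ) : ℝ≥0∞) * μ (Ioi α) ^ s) := by
  classical
  calc P _ ≤ ∑ S ∈ farSubsets A s,
        P {ω | ∀ v ∈ S, heavyAt α (w ω) v} := measure_biUnion_finset_le _ _
    _ ≤ (farSubsets A s).card •
        ((((2*d)^s : ℕ) : ℝ≥0∞) * μ (Ioi α) ^ s) := by
        refine Finset.sum_le_card_nsmul _ _ _ (fun S hS => ?_)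
        rw [mem_farSubsets] at hS
        obtain ⟨_, hSfar, hScard⟩ := hS
        rw [← hScard]
        exact meas_allHeavy hiid α S hSfar
    _ ≤ ((2^A.card : ℕ) : ℝ≥0∞) * _ := by
        rw [nsmul_eq_mul]
        refine mul_le_mul_left ?_ _
        have : (farSubsets A s).card ≤ 2^A.card := by
          rw [← Finset.card_powerset A]
          exact Finset.card_le_card (by unfold farSubsets; exact Finset.filter_subset _ _)
        exact_mod_cast this
/-- ceiling of `m / (2 * 5^d)` -/
def s0 (d m : ℕ) : ℕ := (m + (2 * 5^d - 1)) / (2 * 5^d)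

lemma s0_le {m s : ℕ} (h : m ≤ 2 * 5^d * s) : s0 d m ≤ s := by
  have hB : 0 < 2 * 5^d := by positivity
  rw [s0, Nat.div_le_iff_le_mul_add_pred hB]
  omega

lemma le_s0 (m : ℕ) : m ≤ 2 * 5^d * s0 d m := by
  have hB : 0 < 2 * 5^d := by positivity
  have h1 := Nat.div_add_mod (m + (2 * 5^d - 1)) (2 * 5^d)
  have h2 : (m + (2 * 5^d - 1)) % (2 * 5^d) < 2 * 5^d := Nat.mod_lt _ hB
  unfold s0
  set X := 2 * 5^d * ((m + (2 * 5^d - 1)) / (2 * 5^d)) with hX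
  omega

lemma Far.mono {S T : Finset (V d)} (h : Far T) (hST : S ⊆ T) : Far S :=
  fun v hv u hu hne => h v (hST hv) u (hST hu) hne

lemma Far.empty : Far (∅ : Finset (V d)) := fun v hv => absurd hv (by simp)

lemma extract_far : ∀ (N : ℕ) (T : Finset (V d)), T.card = N →
    ∃ S, S ⊆ T ∧ Far S ∧ T.card ≤ 5^d * S.card := by
  intro N
  induction N using Nat.strong_induction_on with
  | _ N IH =>
  intro T hT
  rcases T.eq_empty_or_nonempty with rfl | ⟨t, ht⟩
  · exact ⟨∅, Finset.Subset.refl _, Far.empty, by simp⟩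
  · classical
    set Tfar := T.filter (fun v => 3 ≤ dist1 t v) with hTfar
    set Tnear := T.filter (fun v => ¬ 3 ≤ dist1 t v) with hTnear
    have hnear : Tnear.card ≤ 5^d := by
      have hmaps : ∀ v ∈ Tnear, v - t ∈ Fintype.piFinset (fun _ : Fin d => Finset.Icc (-2:ℤ) 2) := by
        intro v hv
        rw [hTnear, Finset.mem_filter] at hv
        have hd2 : dist1 t v ≤ 2 := by omega
        rw [Fintype.mem_piFinset]
        intro j
        rw [Finset.mem_Icc]
        have hd2' : (∑ i, |t i - v i|) ≤ 2 := hd2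
        have hle : |t j - v j| ≤ ∑ i, |t i - v i| :=
          Finset.single_le_sum (f := fun i => |t i - v i|) (fun i _ => abs_nonneg _)
            (Finset.mem_univ j)
        have : |t j - v j| ≤ 2 := le_trans hle hd2'
        rw [abs_le] at this
        rw [Pi.sub_apply]
        omega
      have hinj : Set.InjOn (fun v => v - t) Tnear := by
        intro a _ b _ hab
        dsimp only at hab
        rwa [sub_left_inj] at hab
      calc Tnear.card ≤ (Fintype.piFinset (fun _ : Fin d => Finset.Icc (-2:ℤ) 2)).card :=
            Finset.card_le_card_of_injOn _ hmaps hinj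
        _ = 5^d := by
            rw [Fintype.card_piFinset]
            norm_num [Int.card_Icc, Finset.prod_const, Finset.card_univ]
            rfl
    have htnotfar : t ∉ Tfar := by
      rw [hTfar, Finset.mem_filter]
      rw [dist1_self]
      omega
    have hsplit : Tfar.card + Tnear.card = T.card :=
      Finset.card_filter_add_card_filter_not _
    have hTfarsub : Tfar ⊆ T := Finset.filter_subset _ _
    have hTfarlt : Tfar.card < N := by
      have : Tfar.card < T.card :=
        Finset.card_lt_card ⟨hTfarsub, fun hsub => htnotfar (hsub ht)⟩
      omega
    obtain ⟨S', hS'sub, hS'far, hS'card⟩ := IH Tfar.card hTfarlt Tfar rfl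
    have htS' : t ∉ S' := fun h => htnotfar (hS'sub h)
    refine ⟨insert t S', ?_, ?_, ?_⟩
    · intro x hx
      rcases Finset.mem_insert.1 hx with rfl | hx
      · exact ht
      · exact hTfarsub (hS'sub hx)
    · intro v hv u hu hne
      rcases Finset.mem_insert.1 hv with rfl | hv' <;> rcases Finset.mem_insert.1 hu with rfl | hu'
      · exact absurd rfl hne
      · have := hS'sub hu'
        rw [hTfar, Finset.mem_filter] at this
        exact this.2
      · have := hS'sub hv'
        rw [hTfar, Finset.mem_filter] at this
        rw [dist1_symm]
        exact this.2
      · exact hS'far v hv' u hu' hne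
    · rw [Finset.card_insert_of_notMem htS']
      calc T.card = Tfar.card + Tnear.card := hsplit.symm
        _ ≤ 5^d * S'.card + 5^d := by omega
        _ = 5^d * (S'.card + 1) := by ring

lemma event_subset (hd : 2 ≤ d) (α : ℝ) (m : ℕ) (hm : 1 ≤ m) :
    {ω | ∃ W : Finset (V d), badContour α (w ω) W ∧ W.card = m} ⊆
      ⋃ c : Fin m × (Fin (2*m) → Fin d → Fin 3),
        ⋃ S ∈ farSubsets (decode d m c) (s0 d m), {ω | ∀ v ∈ S, heavyAt α (w ω) v} := by
  classical
  rintro ω ⟨W, ⟨hstar, henc, hfrac⟩, hcard⟩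
  obtain ⟨c, hc⟩ := exists_code hd hstar henc m hcard hm
  set T := W.filter (fun v => heavyAt α (w ω) v) with hT
  have hset : {v ∈ (W : Set (V d)) | ∃ u, adj v u ∧ α < w ω s(v, u)} = (T : Set (V d)) := by
    ext v
    rw [hT, Finset.coe_filter]; rfl
  rw [hset, Set.ncard_coe_finset] at hfrac
  have hmT : m ≤ 2 * T.card := by
    rw [hcard] at hfrac
    exact_mod_cast hfrac
  obtain ⟨S', hS'sub, hS'far, hS'card⟩ := extract_far T.card T rfl
  have hms : m ≤ 2 * 5^d * S'.card := by
    calc m ≤ 2 * T.card := hmT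
      _ ≤ 2 * (5^d * S'.card) := by omega
      _ = 2 * 5^d * S'.card := by ring
  obtain ⟨S, hSsub, hScard⟩ := Finset.exists_subset_card_eq (s := S') (s0_le hms)
  refine mem_iUnion.2 ⟨c, mem_iUnion₂.2 ⟨S, ?_, ?_⟩⟩
  · rw [mem_farSubsets]
    refine ⟨?_, hS'far.mono hSsub, hScard⟩
    intro x hx
    rw [hc]
    exact Finset.filter_subset _ _ (hS'sub (hSsub hx))
  · intro v hv
    have := hS'sub (hSsub hv)
    rw [hT, Finset.mem_filter] at this
    exact this.2

lemma meas_Em [IsProbabilityMeasure P] (hiid : IsIIDWeights P μ w) (hd : 2 ≤ d) (α : ℝ)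
    (m : ℕ) (hm : 1 ≤ m) :
    P {ω | ∃ W : Finset (V d), badContour α (w ω) W ∧ W.card = m}
      ≤ ((m * (3^d)^(2*m) : ℕ) : ℝ≥0∞) *
        (((2^(2*m+1) : ℕ) : ℝ≥0∞) *
          ((((2*d)^(s0 d m) : ℕ) : ℝ≥0∞) * μ (Ioi α) ^ (s0 d m))) := by
  classical
  calc P {ω | ∃ W : Finset (V d), badContour α (w ω) W ∧ W.card = m}
      ≤ P (⋃ c : Fin m × (Fin (2*m) → Fin d → Fin 3),
          ⋃ S ∈ farSubsets (decode d m c) (s0 d m), {ω | ∀ v ∈ S, heavyAt α (w ω) v}) :=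
        measure_mono (event_subset hd α m hm)
    _ ≤ ∑' c : Fin m × (Fin (2*m) → Fin d → Fin 3),
          P (⋃ S ∈ farSubsets (decode d m c) (s0 d m), {ω | ∀ v ∈ S, heavyAt α (w ω) v}) :=
        measure_iUnion_le _
    _ = ∑ c : Fin m × (Fin (2*m) → Fin d → Fin 3),
          P (⋃ S ∈ farSubsets (decode d m c) (s0 d m), {ω | ∀ v ∈ S, heavyAt α (w ω) v}) :=
        tsum_fintype _
    _ ≤ Finset.univ.card • (((2^(2*m+1) : ℕ) : ℝ≥0∞) *
          ((((2*d)^(s0 d m) : ℕ) : ℝ≥0∞) * μ (Ioi α) ^ (s0 d m))) := by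
        refine Finset.sum_le_card_nsmul _ _ _ (fun c _ => ?_)
        calc P _ ≤ (((2^(decode d m c).card : ℕ) : ℝ≥0∞) *
              ((((2*d)^(s0 d m) : ℕ) : ℝ≥0∞) * μ (Ioi α) ^ (s0 d m))) :=
              meas_badS hiid α (decode d m c) (s0 d m)
          _ ≤ _ := by
              refine mul_le_mul_left ?_ _
              have h1 : (2:ℕ)^(decode d m c).card ≤ 2^(2*m+1) :=
                Nat.pow_le_pow_right (by omega) (decode_card_le m c)
              exact_mod_cast h1
    _ = ((m * (3^d)^(2*m) : ℕ) : ℝ≥0∞) * _ := by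
        rw [nsmul_eq_mul]
        congr 1
        rw [Finset.card_univ]
        rw [Fintype.card_prod, Fintype.card_fun]
        simp [Fintype.card_fin]
/-- the threshold for `μ (Ioi α)` -/
noncomputable def epsd (d : ℕ) : ℝ :=
  (Real.exp (-3) / (16 * 9^d)) ^ (2*5^d) / (2*d)

lemma epsd_pos (hd : 2 ≤ d) : 0 < epsd d := by
  unfold epsd
  have hd0 : (0:ℝ) < (d:ℝ) := by exact_mod_cast (by omega : 0 < d)
  have h1 : (0:ℝ) < (Real.exp (-3) / (16 * 9^d)) ^ (2*5^d) := by positivity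
  positivity

lemma real_bound (hd : 2 ≤ d) (m : ℕ) (hm : 1 ≤ m) (p : ℝ) (hp0 : 0 ≤ p)
    (hpe : p ≤ epsd d) :
    ((m * (3^d)^(2*m) : ℕ) : ℝ) * (((2^(2*m+1) : ℕ) : ℝ) *
      ((((2*d)^(s0 d m) : ℕ) : ℝ) * p ^ (s0 d m))) ≤ Real.exp (-(3*m)) := by
  set δ : ℝ := Real.exp (-3) / (16 * 9^d) with hδ
  have hδ0 : 0 < δ := by positivity
  have hδ1 : δ ≤ 1 := by
    rw [hδ, div_le_one (by positivity)]
    have h1 : Real.exp (-3) ≤ 1 := (Real.exp_lt_one_iff.2 (by norm_num)).le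
    have h9 : (1:ℝ) ≤ 9^d := one_le_pow₀ (by norm_num)
    nlinarith
  have hd0 : (0:ℝ) < (d:ℝ) := by exact_mod_cast (by omega : 0 < d)
  have hdp : (2*(d:ℝ)) * p ≤ δ^(2*5^d) := by
    have h2 : (2*(d:ℝ)) * p ≤ (2*(d:ℝ)) * epsd d :=
      mul_le_mul_of_nonneg_left hpe (by linarith)
    have h3 : (2*(d:ℝ)) * epsd d = δ^(2*5^d) := by
      rw [epsd, ← hδ]
      field_simp
    linarith
  have hCD : ((2*(d:ℝ)))^(s0 d m) * p^(s0 d m) ≤ δ^m := by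
    rw [← mul_pow]
    calc ((2*(d:ℝ))*p)^(s0 d m) ≤ (δ^(2*5^d))^(s0 d m) :=
          pow_le_pow_left₀ (by positivity) hdp _
      _ = δ^((2*5^d) * s0 d m) := (pow_mul δ _ _).symm
      _ ≤ δ^m := pow_le_pow_of_le_one hδ0.le hδ1 (le_s0 m)
  have hm2 : (m:ℝ) ≤ 2^m := by exact_mod_cast (Nat.lt_two_pow_self (n := m)).le
  have h3eq : ((3:ℝ)^d)^(2*m) = ((9:ℝ)^d)^m := by
    rw [← pow_mul, ← pow_mul, show (9:ℝ) = 3^2 by norm_num, ← pow_mul]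
    congr 1
    ring
  have h8 : (2:ℝ)^(2*m+1) ≤ 8^m := by
    calc (2:ℝ)^(2*m+1) ≤ 2^(3*m) := pow_le_pow_right₀ (by norm_num) (by omega)
      _ = 8^m := by rw [pow_mul]; norm_num
  have hfin : (2:ℝ)^m * ((9:ℝ)^d)^m * (8^m * δ^m) = Real.exp (-(3*(m:ℝ))) := by
    rw [← mul_pow, ← mul_pow, ← mul_pow]
    have hKδ : (2:ℝ) * 9^d * (8 * δ) = Real.exp (-3) := by
      rw [hδ]
      field_simp
      ring
    rw [hKδ, ← Real.exp_nat_mul]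
    congr 1
    ring
  push_cast
  calc (m:ℝ) * ((3:ℝ)^d)^(2*m) * ((2:ℝ)^(2*m+1) * ((2*(d:ℝ))^(s0 d m) * p^(s0 d m)))
      ≤ ((2:ℝ)^m * ((9:ℝ)^d)^m) * (8^m * δ^m) := by
        refine mul_le_mul ?_ ?_ ?_ ?_
        · rw [h3eq]
          exact mul_le_mul_of_nonneg_right hm2 (by positivity)
        · exact mul_le_mul h8 hCD (by positivity) (by positivity)
        · positivity
        · positivity
    _ = Real.exp (-(3*(m:ℝ))) := hfin

end FPPBoundary

namespace FPPBoundary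

/-- Proposition 3.3: for `α` sufficiently large, the probability that there exists an `α`-bad
contour of cardinality at least `n` is at most `e^{-Cn}`. -/
theorem bad_contour_bound (d : ℕ) (hd : 2 ≤ d)
    {Ω : Type} [MeasurableSpace Ω] (P : Measure Ω) [IsProbabilityMeasure P]
    (μ : Measure ℝ) [IsProbabilityMeasure μ] (w : Ω → Sym2 (V d) → ℝ)
    (hiid : IsIIDWeights P μ w) :
    ∃ α₀ : ℝ, ∀ α : ℝ, α₀ ≤ α → ∃ C : ℝ, 0 < C ∧ ∀ n : ℕ, 1 ≤ n →
      P {ω | ∃ W : Finset (V d), badContour α (w ω) W ∧ n ≤ W.card}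
        ≤ ENNReal.ofReal (Real.exp (-(C * n))) := by
  have hε : 0 < epsd d := epsd_pos hd
  have hIemp : (⋂ k : ℕ, Ioi ((k:ℝ))) = ∅ := by
    ext x
    simp only [mem_iInter, mem_Ioi, mem_empty_iff_false, iff_false, not_forall, not_lt]
    obtain ⟨k, hk⟩ := exists_nat_gt x
    exact ⟨k, hk.le⟩
  have htend : Tendsto (fun k : ℕ => μ (Ioi (k:ℝ))) atTop (nhds 0) := by
    have h := tendsto_measure_iInter_atTop (μ := μ) (s := fun k : ℕ => Ioi ((k:ℝ)))
      (fun k => measurableSet_Ioi.nullMeasurableSet)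
      (fun a b hab => Ioi_subset_Ioi (by exact_mod_cast hab))
      ⟨0, measure_ne_top μ _⟩
    rw [hIemp, measure_empty] at h
    exact h
  have hev := htend.eventually_lt_const
    (show (0:ℝ≥0∞) < ENNReal.ofReal (epsd d) from ENNReal.ofReal_pos.2 hε)
  rw [Filter.eventually_atTop] at hev
  obtain ⟨k₀, hk₀⟩ := hev
  refine ⟨(k₀ : ℝ), fun α hα => ⟨1, one_pos, fun n hn => ?_⟩⟩
  have hq : μ (Ioi α) ≤ ENNReal.ofReal (epsd d) := by
    calc μ (Ioi α) ≤ μ (Ioi ((k₀:ℕ):ℝ)) := measure_mono (Ioi_subset_Ioi hα)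
      _ ≤ _ := (hk₀ k₀ le_rfl).le
  have hEm : ∀ m : ℕ, 1 ≤ m →
      P {ω | ∃ W : Finset (V d), badContour α (w ω) W ∧ W.card = m}
        ≤ ENNReal.ofReal (Real.exp (-(3*(m:ℝ)))) := by
    intro m hm
    calc P {ω | ∃ W : Finset (V d), badContour α (w ω) W ∧ W.card = m}
        ≤ ((m * (3^d)^(2*m) : ℕ) : ℝ≥0∞) * (((2^(2*m+1) : ℕ) : ℝ≥0∞) *
          ((((2*d)^(s0 d m) : ℕ) : ℝ≥0∞) * μ (Ioi α) ^ (s0 d m))) := meas_Em hiid hd α m hm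
      _ ≤ ((m * (3^d)^(2*m) : ℕ) : ℝ≥0∞) * (((2^(2*m+1) : ℕ) : ℝ≥0∞) *
          ((((2*d)^(s0 d m) : ℕ) : ℝ≥0∞) * (ENNReal.ofReal (epsd d)) ^ (s0 d m))) := by
          gcongr
      _ = ENNReal.ofReal (((m * (3^d)^(2*m) : ℕ) : ℝ) * (((2^(2*m+1) : ℕ) : ℝ) *
          ((((2*d)^(s0 d m) : ℕ) : ℝ) * (epsd d) ^ (s0 d m)))) := by
          rw [ENNReal.ofReal_mul (by positivity : (0:ℝ) ≤ ((m * (3^d)^(2*m) : ℕ) : ℝ)),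
            ENNReal.ofReal_mul (by positivity : (0:ℝ) ≤ ((2^(2*m+1) : ℕ) : ℝ)),
            ENNReal.ofReal_mul (by positivity : (0:ℝ) ≤ (((2*d)^(s0 d m) : ℕ) : ℝ)),
            ENNReal.ofReal_pow hε.le, ENNReal.ofReal_natCast, ENNReal.ofReal_natCast,
            ENNReal.ofReal_natCast]
      _ ≤ ENNReal.ofReal (Real.exp (-(3*(m:ℝ)))) :=
          ENNReal.ofReal_le_ofReal (real_bound hd m hm (epsd d) hε.le le_rfl)
  have hsub : {ω | ∃ W : Finset (V d), badContour α (w ω) W ∧ n ≤ W.card} ⊆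
      ⋃ j : ℕ, {ω | ∃ W : Finset (V d), badContour α (w ω) W ∧ W.card = n + j} := by
    rintro ω ⟨W, hW, hcard⟩
    exact mem_iUnion.2 ⟨W.card - n, W, hW, by omega⟩
  have hrew : (fun j : ℕ => Real.exp (-(3*((n:ℝ)+j)))) =
      fun j : ℕ => Real.exp (-(3*(n:ℝ))) * (Real.exp (-3))^j := by
    funext j
    rw [← Real.exp_nat_mul, ← Real.exp_add]
    congr 1
    ring
  have hlt1 : Real.exp (-3) < 1 := Real.exp_lt_one_iff.2 (by norm_num)
  have hsummable : Summable (fun j : ℕ => Real.exp (-(3*((n:ℝ)+j)))) := by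
    rw [hrew]
    exact (summable_geometric_of_lt_one (Real.exp_nonneg _) hlt1).mul_left _
  calc P {ω | ∃ W : Finset (V d), badContour α (w ω) W ∧ n ≤ W.card}
      ≤ ∑' j : ℕ, P {ω | ∃ W : Finset (V d), badContour α (w ω) W ∧ W.card = n + j} :=
        (measure_mono hsub).trans (measure_iUnion_le _)
    _ ≤ ∑' j : ℕ, ENNReal.ofReal (Real.exp (-(3*((n:ℝ)+j)))) := by
        refine ENNReal.tsum_le_tsum (fun j => ?_)
        rw [show (-(3*((n:ℝ)+(j:ℝ)))) = -(3*((n+j : ℕ):ℝ)) by push_cast; ring]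
        exact hEm (n+j) (by omega)
    _ = ENNReal.ofReal (∑' j : ℕ, Real.exp (-(3*((n:ℝ)+j)))) :=
        (ENNReal.ofReal_tsum_of_nonneg (fun j => (Real.exp_pos _).le) hsummable).symm
    _ ≤ ENNReal.ofReal (Real.exp (-(1*(n:ℝ)))) := by
        apply ENNReal.ofReal_le_ofReal
        rw [hrew, tsum_mul_left,
          tsum_geometric_of_lt_one (Real.exp_nonneg _) hlt1]
        have he3 : Real.exp (-3) ≤ 1/2 := by
          have h4 : (2:ℝ) ≤ Real.exp 3 := by nlinarith [Real.add_one_le_exp (3:ℝ)]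
          rw [Real.exp_neg]
          calc (Real.exp 3)⁻¹ ≤ (2:ℝ)⁻¹ := inv_anti₀ (by norm_num) h4
            _ = 1/2 := by norm_num
        have hinv : (1 - Real.exp (-3))⁻¹ ≤ 2 := by
          have h1 : (1:ℝ)/2 ≤ 1 - Real.exp (-3) := by linarith
          calc (1 - Real.exp (-3))⁻¹ ≤ ((1:ℝ)/2)⁻¹ := inv_anti₀ (by norm_num) h1
            _ = 2 := by norm_num
        have hexp2 : (2:ℝ) ≤ Real.exp (2*(n:ℝ)) := by
          have h5 := Real.add_one_le_exp (2*(n:ℝ))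
          have hn1 : (1:ℝ) ≤ (n:ℝ) := by exact_mod_cast hn
          linarith
        calc Real.exp (-(3*(n:ℝ))) * (1 - Real.exp (-3))⁻¹
            ≤ Real.exp (-(3*(n:ℝ))) * 2 :=
              mul_le_mul_of_nonneg_left hinv (Real.exp_nonneg _)
          _ ≤ Real.exp (-(3*(n:ℝ))) * Real.exp (2*(n:ℝ)) :=
              mul_le_mul_of_nonneg_left hexp2 (Real.exp_nonneg _)
          _ = Real.exp (-(1*(n:ℝ))) := by rw [← Real.exp_add]; congr 1; ring

end FPPBoundary
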